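/- For each integer n > 2, the 4×4 matrix with canonical-form blocks a = (n+2)/(2n+1), b = n, c₁ = 1/sqrt(2n), c₂ = -sqrt(2n/(2n+1)) is positive definite, satisfies the two-mode uncertainty relation σ + (i/2)(ω ⊕ ω) ≥ 0, and satisfies the weak nonclassical steering condition a - max(c₁²,c₂²)/b < 1/2. -/

import Mathlib

open Matrix Complex ComplexOrder

noncomputable section

/-- Canonical-form two-mode covariance matrix with blocks `a·I₂`, `b·I₂`, `diag(c₁,c₂)`. -/
def canonicalCM (a b c₁ c₂ : ℝ) : Matrix (Fin 4) (Fin 4) ℝ :=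
  !![a, 0, c₁, 0;
     0, a, 0, c₂;
     c₁, 0, b, 0;
     0, c₂, 0, b]

/-- The two-mode symplectic form `Ω = ω ⊕ ω`, `ω = [[0,1],[-1,0]]`. -/
def symplecticForm2 : Matrix (Fin 4) (Fin 4) ℝ :=
  !![0, 1, 0, 0;
     -1, 0, 0, 0;
     0, 0, 0, 1;
     0, 0, -1, 0]

lemma keyQ (n c₁ c₂ : ℝ) (hn : 3 ≤ n) (h1 : 2*n*c₁^2 = 1) (h2 : (2*n+1)*c₂^2 = 2*n)
    (w x y z : ℝ) :
    0 ≤ (n+2)/(2*n+1)*(w^2+x^2) + n*(y^2+z^2) + 2*c₁*w*y + 2*c₂*x*z - w*x - y*z := by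
  have hn0 : (0:ℝ) < n := by linarith
  have hD : (0:ℝ) < 2*n+1 := by linarith
  have hsplit : (n+2)/(2*n+1)*(w^2+x^2) + n*(y^2+z^2) + 2*c₁*w*y + 2*c₂*x*z - w*x - y*z
      = (1/(2*n+1)) * ((n+2)*(w^2+x^2)
          + (2*n+1)*(n*(y^2+z^2) + 2*c₁*w*y + 2*c₂*x*z - w*x - y*z)) := by
    field_simp
    ring
  rw [hsplit]
  apply mul_nonneg (by positivity)
  have hC : (0:ℝ) < 660*n*(5*(2*n+1)+9) := by positivity
  rw [← mul_nonneg_iff_of_pos_left hC]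
  have hid : 660*n*(5*(2*n+1)+9) * ((n+2)*(w^2+x^2)
          + (2*n+1)*(n*(y^2+z^2) + 2*c₁*w*y + 2*c₂*x*z - w*x - y*z))
      = 44*n*(5*(2*n+1)+9)*(3*w+5*(2*n+1)*c₁*y)^2
      + 12*n*(5*(2*n+1)+9)*(11*x+5*(2*n+1)*c₂*z)^2
      + 66*n*((5*(2*n+1)+9)*w-5*(2*n+1)*x)^2
      + 66*n*(10*(2*n+1)-63)*x^2
      + 15*(2*n+1)*(5*(2*n+1)+9)*(2*n*z-11*y)^2
      + 55*(2*n+1)*(5*(2*n+1)+9)*(12*n^2-20*n-43)*y^2 := by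
    linear_combination (-(550*(2*n+1)^2*(5*(2*n+1)+9)*y^2)) * h1
      + (-(300*n*(2*n+1)*(5*(2*n+1)+9)*z^2)) * h2
  rw [hid]
  have t4 : (0:ℝ) ≤ 66*n*(10*(2*n+1)-63)*x^2 := by
    have : (0:ℝ) ≤ 10*(2*n+1)-63 := by linarith
    positivity
  have t6 : (0:ℝ) ≤ 55*(2*n+1)*(5*(2*n+1)+9)*(12*n^2-20*n-43)*y^2 := by
    have : (0:ℝ) ≤ 12*n^2-20*n-43 := by nlinarith
    positivity
  have t1 : (0:ℝ) ≤ 44*n*(5*(2*n+1)+9)*(3*w+5*(2*n+1)*c₁*y)^2 := by positivity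
  have t2 : (0:ℝ) ≤ 12*n*(5*(2*n+1)+9)*(11*x+5*(2*n+1)*c₂*z)^2 := by positivity
  have t3 : (0:ℝ) ≤ 66*n*((5*(2*n+1)+9)*w-5*(2*n+1)*x)^2 := by positivity
  have t5 : (0:ℝ) ≤ 15*(2*n+1)*(5*(2*n+1)+9)*(2*n*z-11*y)^2 := by positivity
  linarith

lemma keyP (n c₁ c₂ : ℝ) (hn : 3 ≤ n) (h1 : 2*n*c₁^2 = 1) (h2 : (2*n+1)*c₂^2 = 2*n)
    (w x y z : ℝ) (h : ¬(w = 0 ∧ x = 0 ∧ y = 0 ∧ z = 0)) :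
    0 < (n+2)/(2*n+1)*(w^2+x^2) + n*(y^2+z^2) + 2*c₁*w*y + 2*c₂*x*z := by
  have hn0 : (0:ℝ) < n := by linarith
  have hD : (0:ℝ) < 2*n+1 := by linarith
  have ha : (1:ℝ)/2 ≤ (n+2)/(2*n+1) := by
    rw [div_le_div_iff₀ (by norm_num) hD]; linarith
  have hc1 : c₁^2 ≤ 1/6 := by nlinarith
  have hc2 : c₂^2 ≤ 1 := by nlinarith
  have hA : 0 ≤ (n+2)/(2*n+1)*w^2 + 2*c₁*w*y + n*y^2 - (1/8)*(w^2+y^2) := by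
    have p1 : 0 ≤ ((n+2)/(2*n+1) - 1/2) * w^2 :=
      mul_nonneg (by linarith) (sq_nonneg w)
    have p2 : 0 ≤ (1/24)*(3*w+8*c₁*y)^2 := by positivity
    have p3 : 0 ≤ (n - 1/8 - (8/3)*c₁^2) * y^2 :=
      mul_nonneg (by nlinarith) (sq_nonneg y)
    nlinarith [p1, p2, p3]
  have hB : 0 ≤ (n+2)/(2*n+1)*x^2 + 2*c₂*x*z + n*z^2 - (1/8)*(x^2+z^2) := by
    have p1 : 0 ≤ ((n+2)/(2*n+1) - 1/2) * x^2 :=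
      mul_nonneg (by linarith) (sq_nonneg x)
    have p2 : 0 ≤ (1/24)*(3*x+8*c₂*z)^2 := by positivity
    have p3 : 0 ≤ (n - 1/8 - (8/3)*c₂^2) * z^2 :=
      mul_nonneg (by nlinarith) (sq_nonneg z)
    nlinarith [p1, p2, p3]
  have hpos : 0 < w^2 + x^2 + y^2 + z^2 := by
    push_neg at h
    by_cases hw : w = 0
    · by_cases hx : x = 0
      · by_cases hy : y = 0
        · have hz := h hw hx hy
          have : 0 < z^2 := by positivity
          linarith [sq_nonneg w, sq_nonneg x, sq_nonneg y, this]
        · have : 0 < y^2 := by positivity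
          linarith [sq_nonneg w, sq_nonneg x, sq_nonneg z, this]
      · have : 0 < x^2 := by positivity
        linarith [sq_nonneg w, sq_nonneg y, sq_nonneg z, this]
    · have : 0 < w^2 := by positivity
      linarith [sq_nonneg x, sq_nonneg y, sq_nonneg z, this]
  nlinarith [hA, hB, hpos]

set_option maxHeartbeats 2000000 in
/-- for each integer `n > 2`, the canonical-form covariance matrix with
`a = (n+2)/(2n+1)`, `b = n`, `c₁ = 1/√(2n)`, `c₂ = -√(2n/(2n+1))` is positive definite,
satisfies the two-mode uncertainty relation `σ + (i/2)Ω ≥ 0`, and satisfies the weak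
nonclassical steering condition `a - max(c₁²,c₂²)/b < 1/2`. -/
theorem WNS_family_small_discord (n : ℤ) (hn : 2 < n) :
    (canonicalCM ((n + 2) / (2 * n + 1)) n (1 / Real.sqrt (2 * n))
        (-Real.sqrt (2 * n / (2 * n + 1)))).PosDef ∧
    (((canonicalCM ((n + 2) / (2 * n + 1)) n (1 / Real.sqrt (2 * n))
          (-Real.sqrt (2 * n / (2 * n + 1)))).map (Complex.ofReal) +
        (Complex.I / 2) • (symplecticForm2.map (Complex.ofReal))).PosSemidef) ∧
    ((n : ℝ) + 2) / (2 * n + 1) -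
        max ((1 / Real.sqrt (2 * n)) ^ 2) ((-Real.sqrt (2 * n / (2 * n + 1))) ^ 2) / n
      < 1 / 2 := by
  have hm : (3:ℝ) ≤ (n:ℝ) := by exact_mod_cast hn
  have hm0 : (0:ℝ) < (n:ℝ) := by linarith
  have hD : (0:ℝ) < 2*(n:ℝ)+1 := by linarith
  set m : ℝ := (n:ℝ) with hmdef
  set c₁ : ℝ := 1 / Real.sqrt (2 * m) with hc1def
  set c₂ : ℝ := -Real.sqrt (2 * m / (2 * m + 1)) with hc2def
  have hc1sq : 2*m*c₁^2 = 1 := by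
    rw [hc1def, div_pow, one_pow, Real.sq_sqrt (by linarith : (0:ℝ) ≤ 2*m)]
    field_simp
  have hc2sq : (2*m+1)*c₂^2 = 2*m := by
    rw [hc2def, neg_pow, Real.sq_sqrt (by positivity : (0:ℝ) ≤ 2*m/(2*m+1))]
    field_simp
  set a : ℝ := (m + 2) / (2 * m + 1) with hadef
  clear_value m c₁ c₂ a
  refine ⟨?_, ?_, ?_⟩
  · constructor
    · ext i j
      fin_cases i <;> fin_cases j <;> simp [canonicalCM, Matrix.conjTranspose_apply]
    · intro x hx
      have hx' : ¬(x 0 = 0 ∧ x 1 = 0 ∧ x 2 = 0 ∧ x 3 = 0) := by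
        rintro ⟨h0, h1, h2, h3⟩
        apply hx
        ext i
        fin_cases i <;> assumption
      have := keyP m c₁ c₂ hm hc1sq hc2sq (x 0) (x 1) (x 2) (x 3) hx'
      rw [← hadef] at this
      simp only [star_trivial]
      simp [canonicalCM, dotProduct, Matrix.mulVec, Fin.sum_univ_four,
        Matrix.vecHead, Matrix.vecTail, Finsupp.sum_fintype]
      linarith [this]
  · constructor
    · ext i j
      fin_cases i <;> fin_cases j <;>
        simp [canonicalCM, symplecticForm2, Matrix.conjTranspose_apply, Matrix.vecHead,
          Matrix.vecTail] <;> ring_nf <;>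
        simp [Complex.ext_iff]
    · intro x
      have k1 := keyQ m c₁ c₂ hm hc1sq hc2sq (x 0).re (x 1).im (x 2).re (x 3).im
      have k2 := keyQ m c₁ c₂ hm hc1sq hc2sq (x 0).im (-(x 1).re) (x 2).im (-(x 3).re)
      rw [← hadef] at k1 k2
      rw [show (Complex.I/2 : ℂ) = ((1/2:ℝ):ℂ) * Complex.I from by push_cast; ring]
      simp [canonicalCM, symplecticForm2, dotProduct, Matrix.mulVec, Fin.sum_univ_four,
        Matrix.vecHead, Matrix.vecTail, Finsupp.sum_fintype]
      rw [Complex.le_def]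
      constructor
      · simp [Complex.mul_re, Complex.mul_im, Complex.add_re, Complex.add_im,
          Complex.sub_re, Complex.sub_im]
        linarith [k1, k2]
      · simp [Complex.mul_re, Complex.mul_im, Complex.add_re, Complex.add_im,
          Complex.sub_re, Complex.sub_im] <;> ring
  · have e1 : c₁^2 = 1/(2*m) := by
      rw [eq_div_iff (by linarith : 2*m ≠ (0:ℝ))]
      linarith [hc1sq]
    have e2 : c₂^2 = 2*m/(2*m+1) := by
      rw [eq_div_iff (by linarith : 2*m+1 ≠ (0:ℝ))]
      linarith [hc2sq]
    rw [e1, e2, max_eq_right, hadef]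
    · have key : (m+2)/(2*m+1) - (2*m/(2*m+1))/m = m/(2*m+1) := by
        field_simp
        ring
      rw [key, div_lt_iff₀ hD]
      linarith
    · rw [div_le_div_iff₀ (by linarith) hD]
      nlinarith
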